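/- (Flagged Jacobi–Trudi identity, symplectic case.) Let n ≥ 1, let R be a commutative ring, let x_1, …, x_n be invertible elements of R with x̄_i := x_i^{−1}, let a = (a_1, a_2, …) be a sequence in R, and let λ = (λ_1 ≥ … ≥ λ_n ≥ 0) be a partition with at most n parts. Then det_{1≤i,j≤n} ( x_i·(x_i|a)^{λ_j+n−j} − x̄_i·(x̄_i|a)^{λ_j+n−j} ) = ∏_{i=1}^n (x_i − x̄_i) · ∏_{1≤i<j≤n}(x_i + x̄_i − x_j − x̄_j) · det_{1≤i,j≤n} ( h^{sp}_{λ_j−j+i}(x^{(i)}, x̄^{(i)}|a) ), where x^{(i)} := (x_i, …, x_n) and x̄^{(i)} := (x̄_i, …, x̄_n). -/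

import Mathlib

open Finset

noncomputable def geom {R : Type*} [CommRing R] (x : R) : PowerSeries R :=
  PowerSeries.mk fun k => x ^ k

noncomputable def lin {R : Type*} [CommRing R] (a : R) : PowerSeries R :=
  1 + PowerSeries.C a * PowerSeries.X

noncomputable def facpow {R : Type*} [CommRing R] (x : R) (a : ℕ → R) (m : ℕ) : R :=
  ∏ j ∈ Finset.range m, (x + a (j + 1))

noncomputable def hgl {R : Type*} [CommRing R] {n : ℕ} (x : Fin n → R) (a : ℕ → R) (m : ℤ) : R :=
  if 0 ≤ m then
    PowerSeries.coeff m.toNat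
      ((∏ i, geom (x i)) * ∏ j ∈ Finset.range (n + m.toNat - 1), lin (a (j + 1)))
  else 0

noncomputable def hsp {R : Type*} [CommRing R] {n : ℕ} (x : Fin n → Rˣ) (a : ℕ → R) (m : ℤ) : R :=
  if 0 ≤ m then
    PowerSeries.coeff m.toNat
      ((∏ i, geom ((x i : R)) * geom (((x i)⁻¹ : Rˣ) : R)) *
        ∏ j ∈ Finset.range (n + m.toNat - 1), lin (a (j + 1)))
  else 0

noncomputable def hoo {R : Type*} [CommRing R] {n : ℕ} (x : Fin n → Rˣ) (a : ℕ → R) (m : ℤ) : R :=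
  if 0 ≤ m then
    PowerSeries.coeff m.toNat
      ((1 + PowerSeries.X) * (∏ i, geom ((x i : R)) * geom (((x i)⁻¹ : Rˣ) : R)) *
        ∏ j ∈ Finset.range (n + m.toNat - 1), lin (a (j + 1)))
  else 0

noncomputable def heo {R : Type*} [CommRing R] {n : ℕ} (x : Fin n → Rˣ) (a : ℕ → R) (m : ℤ) : R :=
  if 0 ≤ m then
    if h : n = 1 then
      (PowerSeries.coeff m.toNat
        ((geom ((x ⟨0, by omega⟩ : Rˣ) : R) + geom (((x ⟨0, by omega⟩)⁻¹ : Rˣ) : R)) *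
          ∏ j ∈ Finset.range m.toNat, lin (a (j + 1))))
        - (if m = 0 then 1 else 0)
    else
      PowerSeries.coeff m.toNat
        ((1 - PowerSeries.X ^ 2) * (∏ i, geom ((x i : R)) * geom (((x i)⁻¹ : Rˣ) : R)) *
          ∏ j ∈ Finset.range (n + m.toNat - 1), lin (a (j + 1)))
  else 0

noncomputable def heod {R : Type*} [CommRing R] {n : ℕ} (x : Fin n → Rˣ) (a : ℕ → R) (m : ℤ) : R :=
  if 0 < m then
    if h : 0 < n then
      PowerSeries.coeff m.toNat
        ((geom ((x ⟨0, h⟩ : Rˣ) : R) - geom (((x ⟨0, h⟩)⁻¹ : Rˣ) : R)) *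
          (∏ i ∈ Finset.univ.filter (fun i : Fin n => i ≠ ⟨0, h⟩),
            geom ((x i : R)) * geom (((x i)⁻¹ : Rˣ) : R)) *
          ∏ j ∈ Finset.range (n + m.toNat - 1), lin (a (j + 1)))
    else 0
  else 0



namespace FJT
open Polynomial
variable {R : Type*} [CommRing R]

lemma geom_inv (x : R) :
    geom x * (1 - PowerSeries.C x * PowerSeries.X) = 1 := by
  ext n
  rw [mul_sub, mul_one, map_sub]
  cases n with
  | zero =>
    simp [geom, PowerSeries.coeff_zero_eq_constantCoeff]
  | succ n =>
    rw [show geom x * (PowerSeries.C x * PowerSeries.X)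
        = PowerSeries.C x * (PowerSeries.X * geom x) by ring,
      PowerSeries.coeff_C_mul, PowerSeries.coeff_succ_X_mul]
    simp [geom, pow_succ, mul_comm]

lemma geom_shift (x : R) (f : PowerSeries R) :
    geom x * f = f + PowerSeries.C x * PowerSeries.X * (geom x * f) := by
  have h : geom x * (1 - PowerSeries.C x * PowerSeries.X) * f = 1 * f := by
    rw [geom_inv]
  linear_combination h

lemma coeff_lin_prod (a : ℕ → R) (p : ℕ) :
    ∀ k, p < k → PowerSeries.coeff k (∏ s ∈ range p, lin (a (s + 1))) = 0 := by
  induction p with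
  | zero =>
    intro k hk
    rw [prod_range_zero, PowerSeries.coeff_one, if_neg (by omega)]
  | succ p ih =>
    intro k hk
    rw [prod_range_succ, lin, mul_add, mul_one, map_add, ih k (by omega), zero_add]
    obtain ⟨k', rfl⟩ : ∃ k', k = k' + 1 := ⟨k - 1, by omega⟩
    rw [show (∏ s ∈ range p, lin (a (s+1))) * (PowerSeries.C (a (p+1)) * PowerSeries.X)
        = PowerSeries.C (a (p+1)) * (PowerSeries.X * ∏ s ∈ range p, lin (a (s+1))) by ring,
      PowerSeries.coeff_C_mul, PowerSeries.coeff_succ_X_mul, ih k' (by omega), mul_zero]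

lemma facpow_succ (x : R) (a : ℕ → R) (p : ℕ) :
    facpow x a (p + 1) = facpow x a p * (x + a (p + 1)) := by
  rw [facpow, facpow, prod_range_succ]

lemma facpow_eq_coeff (x : R) (a : ℕ → R) (p : ℕ) :
    facpow x a p = PowerSeries.coeff p (geom x * ∏ s ∈ range p, lin (a (s + 1))) := by
  induction p with
  | zero =>
    simp [facpow, geom, PowerSeries.coeff_zero_eq_constantCoeff]
  | succ p ih =>
    have hR : geom x * ∏ s ∈ range (p+1), lin (a (s+1))
        = geom x * (∏ s ∈ range p, lin (a (s+1)))
          * (1 + PowerSeries.C (a (p+1)) * PowerSeries.X) := by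
      rw [prod_range_succ, lin, mul_assoc]
    rw [facpow_succ, hR]
    set L := ∏ s ∈ range p, lin (a (s+1)) with hL
    conv_rhs => rw [mul_add, mul_one, map_add]
    rw [show geom x * L * (PowerSeries.C (a (p+1)) * PowerSeries.X)
        = PowerSeries.C (a (p+1)) * (PowerSeries.X * (geom x * L)) by ring,
      PowerSeries.coeff_C_mul, PowerSeries.coeff_succ_X_mul, ← ih]
    conv_rhs => rw [geom_shift x L]
    rw [map_add, coeff_lin_prod a p _ (by omega), zero_add,
      show PowerSeries.C x * PowerSeries.X * (geom x * L)
        = PowerSeries.C x * (PowerSeries.X * (geom x * L)) by ring,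
      PowerSeries.coeff_C_mul, PowerSeries.coeff_succ_X_mul, ← ih]
    ring

lemma geom_pair (x y : R) :
    PowerSeries.C (x - y) * (geom x * geom y)
      = PowerSeries.C x * geom x - PowerSeries.C y * geom y := by
  have hx := geom_inv x
  have hy := geom_inv y
  have hu : IsUnit ((1 - PowerSeries.C x * PowerSeries.X) *
      (1 - PowerSeries.C y * PowerSeries.X)) := by
    refine IsUnit.of_mul_eq_one (geom x * geom y) ?_
    calc (1 - PowerSeries.C x * PowerSeries.X) * (1 - PowerSeries.C y * PowerSeries.X) *
          (geom x * geom y)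
        = (geom x * (1 - PowerSeries.C x * PowerSeries.X)) *
          (geom y * (1 - PowerSeries.C y * PowerSeries.X)) := by ring
      _ = 1 := by rw [hx, hy, one_mul]
  apply hu.mul_left_cancel
  calc (1 - PowerSeries.C x * PowerSeries.X) * (1 - PowerSeries.C y * PowerSeries.X) *
        (PowerSeries.C (x - y) * (geom x * geom y))
      = PowerSeries.C (x - y) * ((geom x * (1 - PowerSeries.C x * PowerSeries.X)) *
          (geom y * (1 - PowerSeries.C y * PowerSeries.X))) := by ring
    _ = PowerSeries.C (x - y) := by rw [hx, hy]; ring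
    _ = (1 - PowerSeries.C x * PowerSeries.X) * (1 - PowerSeries.C y * PowerSeries.X) *
        (PowerSeries.C x * geom x - PowerSeries.C y * geom y) := by
        rw [map_sub]
        calc PowerSeries.C x - PowerSeries.C y
            = PowerSeries.C x * (geom x * (1 - PowerSeries.C x * PowerSeries.X)) *
                (1 - PowerSeries.C y * PowerSeries.X)
              - PowerSeries.C y * (geom y * (1 - PowerSeries.C y * PowerSeries.X)) *
                (1 - PowerSeries.C x * PowerSeries.X) := by rw [hx, hy]; ring
          _ = _ := by ring

lemma row_base (x y : R) (a : ℕ → R) (p : ℕ) :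
    x * facpow x a p - y * facpow y a p
      = (x - y) * PowerSeries.coeff p (geom x * geom y * ∏ s ∈ range p, lin (a (s + 1))) := by
  rw [facpow_eq_coeff, facpow_eq_coeff, ← PowerSeries.coeff_C_mul, ← PowerSeries.coeff_C_mul,
    ← map_sub, ← PowerSeries.coeff_C_mul]
  congr 1
  calc PowerSeries.C x * (geom x * ∏ s ∈ range p, lin (a (s+1)))
        - PowerSeries.C y * (geom y * ∏ s ∈ range p, lin (a (s+1)))
      = (PowerSeries.C x * geom x - PowerSeries.C y * geom y) *
          ∏ s ∈ range p, lin (a (s+1)) := by ring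
    _ = _ := by rw [← geom_pair]; ring

end FJT
namespace FJT
open Polynomial Finset
variable {R : Type*} [CommRing R]

noncomputable def newtonCoeff : (ℕ → R) → R[X] → ℕ → R
  | w, P, 0 => P.eval (w 0)
  | w, P, (k+1) =>
    newtonCoeff (fun l => w (l + 1)) ((P - C (P.eval (w 0))) /ₘ (X - C (w 0))) k

@[simp] lemma newtonCoeff_zero (w : ℕ → R) (P : R[X]) :
    newtonCoeff w P 0 = P.eval (w 0) := rfl

lemma newtonCoeff_succ (w : ℕ → R) (P : R[X]) (k : ℕ) :
    newtonCoeff w P (k + 1)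
      = newtonCoeff (fun l => w (l + 1)) ((P - C (P.eval (w 0))) /ₘ (X - C (w 0))) k := rfl

lemma eval_divByMonic_decomp (w0 : R) (P : R[X]) :
    P = C (P.eval w0) + (X - C w0) * ((P - C (P.eval w0)) /ₘ (X - C w0)) := by
  have hd : (X - C w0) ∣ (P - C (P.eval w0)) := X_sub_C_dvd_sub_C_eval
  have h := Polynomial.modByMonic_add_div (P - C (P.eval w0)) (X - C w0)
  rw [(Polynomial.modByMonic_eq_zero_iff_dvd (monic_X_sub_C w0)).2 hd, zero_add] at h
  linear_combination -h

lemma degree_divByMonic_step {d : ℕ} {P : R[X]} (h : P.degree < (d + 1 : ℕ)) (w0 : R) :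
    ((P - C (P.eval w0)) /ₘ (X - C w0)).degree < (d : ℕ) := by
  set Q := (P - C (P.eval w0)) /ₘ (X - C w0) with hQdef
  by_cases hQ : Q = 0
  · rw [hQ, degree_zero]; exact WithBot.bot_lt_coe d
  · have hid : P - C (P.eval w0) = Q * (X - C w0) := by
      have hdec := eval_divByMonic_decomp w0 P
      linear_combination hdec
    have hdegP : (P - C (P.eval w0)).degree < ((d + 1 : ℕ) : WithBot ℕ) := by
      refine lt_of_le_of_lt (degree_sub_le _ _) ?_
      rw [max_lt_iff]
      exact ⟨h, lt_of_le_of_lt degree_C_le (by exact_mod_cast d.succ_pos)⟩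
    haveI : Nontrivial R := Polynomial.nontrivial_iff.mp ⟨⟨Q, 0, hQ⟩⟩
    have hne : Q * (X - C w0) ≠ 0 := by
      intro h0
      refine hQ ((monic_X_sub_C w0).isRegular.right ?_)
      show Q * (X - C w0) = 0 * (X - C w0)
      rw [h0, zero_mul]
    have h2 : (Q * (X - C w0)).degree < ((d + 1 : ℕ) : WithBot ℕ) := hid ▸ hdegP
    rw [← natDegree_lt_iff_degree_lt hne] at h2
    have h3 : (Q * (X - C w0)).natDegree = Q.natDegree + 1 := by
      rw [natDegree_mul' (by
        rw [leadingCoeff_X_sub_C, mul_one]; exact leadingCoeff_ne_zero.2 hQ),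
        natDegree_X_sub_C]
    rw [← natDegree_lt_iff_degree_lt hQ]
    omega

lemma newton_expand :
    ∀ (d : ℕ) (w : ℕ → R) (P : R[X]), P.degree < (d : ℕ) →
      P = ∑ k ∈ range d, C (newtonCoeff w P k) * ∏ l ∈ range k, (X - C (w l)) := by
  intro d
  induction d with
  | zero =>
    intro w P h
    have : P = 0 := by
      by_contra hP
      rw [degree_eq_natDegree hP] at h
      exact absurd (WithBot.coe_lt_coe.1 h) (by omega)
    simp [this]
  | succ d ih =>
    intro w P h
    set c := P.eval (w 0) with hc
    set Q := (P - C c) /ₘ (X - C (w 0)) with hQ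
    have hdec : P = C c + (X - C (w 0)) * Q := eval_divByMonic_decomp (w 0) P
    have hQd : Q.degree < (d : ℕ) := degree_divByMonic_step h (w 0)
    have hIH := ih (fun l => w (l + 1)) Q hQd
    rw [Finset.sum_range_succ']
    have h0 : C (newtonCoeff w P 0) * ∏ l ∈ range 0, (X - C (w l)) = C c := by
      simp [hc]
    rw [h0]
    have hterm : ∀ k, C (newtonCoeff w P (k + 1)) * ∏ l ∈ range (k + 1), (X - C (w l))
        = (X - C (w 0)) *
          (C (newtonCoeff (fun l => w (l + 1)) Q k) *
            ∏ l ∈ range k, (X - C (w (l + 1)))) := by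
      intro k
      rw [newtonCoeff_succ, ← hc, ← hQ, Finset.prod_range_succ']
      ring
    calc P = C c + (X - C (w 0)) * Q := hdec
      _ = C c + (X - C (w 0)) *
          ∑ k ∈ range d, C (newtonCoeff (fun l => w (l + 1)) Q k) *
            ∏ l ∈ range k, (X - C (w (l + 1))) := by rw [← hIH]
      _ = _ := by
        rw [Finset.mul_sum, Finset.sum_congr rfl fun k _ => (hterm k)]
        ring

lemma newtonCoeff_eq_zero :
    ∀ (k : ℕ) (w : ℕ → R) (P : R[X]) (m : ℕ), k < m →
      (∏ l ∈ range m, (X - C (w l))) ∣ P → newtonCoeff w P k = 0 := by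
  intro k
  induction k with
  | zero =>
    intro w P m hm hdvd
    have h1 : (X - C (w 0)) ∣ P :=
      dvd_trans (Finset.dvd_prod_of_mem (fun l => X - C (w l)) (mem_range.2 hm)) hdvd
    obtain ⟨S, rfl⟩ := h1
    simp
  | succ k ih =>
    intro w P m hm hdvd
    obtain ⟨m', rfl⟩ : ∃ m', m = m' + 1 := ⟨m - 1, by omega⟩
    obtain ⟨S, rfl⟩ := hdvd
    set T := (∏ l ∈ range m', (X - C (w (l + 1)))) * S with hT
    have hPT : (∏ l ∈ range (m' + 1), (X - C (w l))) * S = (X - C (w 0)) * T := by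
      rw [hT, Finset.prod_range_succ']
      ring
    rw [hPT]
    have heval : ((X - C (w 0)) * T).eval (w 0) = 0 := by simp
    rw [newtonCoeff_succ, heval, map_zero, sub_zero,
      Polynomial.mul_divByMonic_cancel_left T (monic_X_sub_C (w 0))]
    exact ih (fun l => w (l + 1)) T m' (by omega) ⟨S, rfl⟩

lemma newtonCoeff_diag :
    ∀ (k : ℕ) (w : ℕ → R) (g : R[X]),
      newtonCoeff w ((∏ l ∈ range k, (X - C (w l))) * g) k = g.eval (w k) := by
  intro k
  induction k with
  | zero => simp
  | succ k ih =>
    intro w g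
    set T := (∏ l ∈ range k, (X - C (w (l + 1)))) * g with hT
    have hPT : (∏ l ∈ range (k + 1), (X - C (w l))) * g = (X - C (w 0)) * T := by
      rw [hT, Finset.prod_range_succ']
      ring
    rw [hPT]
    have heval : ((X - C (w 0)) * T).eval (w 0) = 0 := by simp
    rw [newtonCoeff_succ, heval, map_zero, sub_zero,
      Polynomial.mul_divByMonic_cancel_left T (monic_X_sub_C (w 0))]
    exact ih (fun l => w (l + 1)) g

end FJT
namespace FJT
open Polynomial Finset
variable {R : Type*} [CommRing R]

noncomputable def phi (d : ℕ) (P : R[X]) : PowerSeries R :=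
  ∑ k ∈ range (d + 1),
    PowerSeries.C (P.coeff k) * PowerSeries.X ^ (d - k) * (1 + PowerSeries.X ^ 2) ^ k

lemma phi_sum {ι : Type*} (d : ℕ) (s : Finset ι) (g : ι → R[X]) :
    phi d (∑ i ∈ s, g i) = ∑ i ∈ s, phi d (g i) := by
  unfold phi
  rw [Finset.sum_comm]
  refine Finset.sum_congr rfl fun k _ => ?_
  rw [Polynomial.finset_sum_coeff, map_sum, Finset.sum_mul, Finset.sum_mul]

lemma phi_sub (d : ℕ) (P Q : R[X]) : phi d (P - Q) = phi d P - phi d Q := by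
  unfold phi
  rw [← Finset.sum_sub_distrib]
  refine Finset.sum_congr rfl fun k _ => ?_
  rw [Polynomial.coeff_sub, map_sub]
  ring

lemma phi_C_mul (d : ℕ) (c : R) (P : R[X]) :
    phi d (C c * P) = PowerSeries.C c * phi d P := by
  unfold phi
  rw [Finset.mul_sum]
  refine Finset.sum_congr rfl fun k _ => ?_
  rw [Polynomial.coeff_C_mul, map_mul]
  ring

lemma phi_succ {d : ℕ} {P : R[X]} (h : P.natDegree ≤ d) :
    phi (d + 1) P = PowerSeries.X * phi d P := by
  unfold phi
  rw [Finset.sum_range_succ, Polynomial.coeff_eq_zero_of_natDegree_lt (by omega), map_zero,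
    zero_mul, zero_mul, add_zero, Finset.mul_sum]
  refine Finset.sum_congr rfl fun k hk => ?_
  have hkd : k ≤ d := by have := Finset.mem_range.1 hk; omega
  rw [show d + 1 - k = (d - k) + 1 by omega, pow_succ]
  ring

lemma phi_X_mul (d : ℕ) (P : R[X]) :
    phi (d + 1) (X * P) = (1 + PowerSeries.X ^ 2) * phi d P := by
  unfold phi
  rw [Finset.sum_range_succ']
  have h0 : PowerSeries.C ((X * P).coeff 0) * PowerSeries.X ^ (d + 1 - 0) *
      (1 + PowerSeries.X ^ 2) ^ 0 = 0 := by
    rw [Polynomial.mul_coeff_zero, Polynomial.coeff_X_zero, zero_mul, map_zero, zero_mul, zero_mul]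
  rw [h0, add_zero, Finset.mul_sum]
  refine Finset.sum_congr rfl fun k hk => ?_
  have hkd : k ≤ d := by have := Finset.mem_range.1 hk; omega
  rw [Polynomial.coeff_X_mul, show d + 1 - (k + 1) = d - k by omega, pow_succ]
  ring

lemma phi_linear {d : ℕ} {P : R[X]} (h : P.natDegree ≤ d) (c : R) :
    phi (d + 1) ((X - C c) * P)
      = (1 - PowerSeries.C c * PowerSeries.X + PowerSeries.X ^ 2) * phi d P := by
  rw [show (X - C c) * P = X * P - C c * P by ring, phi_sub, phi_X_mul, phi_C_mul, phi_succ h]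
  ring

lemma natDegree_prod_linear (s : Finset ℕ) (c : ℕ → R) :
    (∏ l ∈ s, (X - C (c l))).natDegree ≤ s.card := by
  refine le_trans (Polynomial.natDegree_prod_le s (fun l => X - C (c l))) ?_
  have h1 : ∑ l ∈ s, (X - C (c l)).natDegree ≤ ∑ l ∈ s, 1 :=
    Finset.sum_le_sum fun l _ => natDegree_X_sub_C_le (c l)
  simpa using h1

lemma phi_prod :
    ∀ (d : ℕ) (s : Finset ℕ) (c : ℕ → R), s.card = d →
      phi d (∏ l ∈ s, (X - C (c l)))
        = ∏ l ∈ s, (1 - PowerSeries.C (c l) * PowerSeries.X + PowerSeries.X ^ 2) := by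
  intro d
  induction d with
  | zero =>
    intro s c hs
    rw [Finset.card_eq_zero.1 hs, Finset.prod_empty, Finset.prod_empty]
    unfold phi
    simp
  | succ d ih =>
    intro s c hs
    obtain ⟨a, t, hat, hins, hcard⟩ := Finset.card_eq_succ.1 hs
    subst hins
    rw [Finset.prod_insert hat, Finset.prod_insert hat,
      phi_linear (le_trans (natDegree_prod_linear t c) (le_of_eq hcard)), ih t c hcard]

lemma phi_pad : ∀ (e : ℕ) {d : ℕ} {P : R[X]}, P.natDegree ≤ d →
    phi (d + e) P = PowerSeries.X ^ e * phi d P := by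
  intro e
  induction e with
  | zero => intro d P h; rw [Nat.add_zero, pow_zero, one_mul]
  | succ e ih =>
    intro d P h
    rw [show d + (e + 1) = (d + e) + 1 by omega, phi_succ (le_trans h (by omega)), ih h, pow_succ]
    ring

end FJT
namespace FJT
open Polynomial Finset
variable {R : Type*} [CommRing R]

lemma Q_mul_gg {x y : R} (hxy : x * y = 1) :
    (1 - PowerSeries.C (x + y) * PowerSeries.X + PowerSeries.X ^ 2) * (geom x * geom y)
      = 1 := by
  have hC : PowerSeries.C x * PowerSeries.C y = 1 := by rw [← map_mul, hxy, map_one]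
  have hfac : (1 : PowerSeries R) - PowerSeries.C (x + y) * PowerSeries.X + PowerSeries.X ^ 2
      = (1 - PowerSeries.C x * PowerSeries.X) * (1 - PowerSeries.C y * PowerSeries.X) := by
    rw [map_add]
    linear_combination (-(PowerSeries.X ^ 2) : PowerSeries R) * hC
  rw [hfac]
  calc (1 - PowerSeries.C x * PowerSeries.X) * (1 - PowerSeries.C y * PowerSeries.X) *
        (geom x * geom y)
      = (geom x * (1 - PowerSeries.C x * PowerSeries.X)) *
        (geom y * (1 - PowerSeries.C y * PowerSeries.X)) := by ring
    _ = 1 := by rw [geom_inv, geom_inv, one_mul]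

lemma key (n : ℕ) (u v : ℕ → R) (huv : ∀ l, u l * v l = 1) (i : ℕ) (hi : i < n) :
    geom (u i) * geom (v i)
      = ∑ k ∈ range n, PowerSeries.C
          (newtonCoeff (fun l => u l + v l)
            (∏ l ∈ (range n).erase i, (X - C (u l + v l))) k)
          * (PowerSeries.X ^ (n - 1 - k) * ∏ l ∈ Ico k n, (geom (u l) * geom (v l))) := by
  set w : ℕ → R := fun l => u l + v l with hw
  set gg : ℕ → PowerSeries R := fun l => geom (u l) * geom (v l) with hgg
  set Qps : ℕ → PowerSeries R :=
    fun l => 1 - PowerSeries.C (w l) * PowerSeries.X + PowerSeries.X ^ 2 with hQps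
  set f : R[X] := ∏ l ∈ (range n).erase i, (X - C (w l)) with hf
  set A : ℕ → R := newtonCoeff w f with hA
  have hcard : ((range n).erase i).card = n - 1 := by
    rw [Finset.card_erase_of_mem (Finset.mem_range.2 hi), Finset.card_range]
  have hdeg : f.degree < (n : ℕ) := by
    refine lt_of_le_of_lt Polynomial.degree_le_natDegree ?_
    have h1 : f.natDegree ≤ n - 1 := hcard ▸ natDegree_prod_linear _ w
    exact_mod_cast (by omega : f.natDegree < n)
  have hexp := newton_expand n w f hdeg
  have hphi1 : phi (n - 1) f = ∏ l ∈ (range n).erase i, Qps l := phi_prod (n - 1) _ w hcard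
  have hphi2 : phi (n - 1) f
      = ∑ k ∈ range n, PowerSeries.C (A k) *
          (PowerSeries.X ^ (n - 1 - k) * ∏ l ∈ range k, Qps l) := by
    conv_lhs => rw [hexp]
    rw [phi_sum]
    refine Finset.sum_congr rfl fun k hk => ?_
    rw [phi_C_mul]
    congr 1
    have hk' : k ≤ n - 1 := by have := Finset.mem_range.1 hk; omega
    have hdb : (∏ l ∈ range k, (X - C (w l))).natDegree ≤ k := by
      have := natDegree_prod_linear (range k) w
      rwa [Finset.card_range] at this
    have hpad := phi_pad (n - 1 - k) hdb
    rw [show k + (n - 1 - k) = n - 1 by omega] at hpad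
    rw [hpad, phi_prod k (range k) w (Finset.card_range k)]
  have hQid : ∏ l ∈ (range n).erase i, Qps l
      = ∑ k ∈ range n, PowerSeries.C (A k) *
          (PowerSeries.X ^ (n - 1 - k) * ∏ l ∈ range k, Qps l) := by
    rw [← hphi1, hphi2]
  set G : PowerSeries R := ∏ l ∈ range n, gg l with hG
  have hQgg : ∀ l, Qps l * gg l = 1 := fun l => Q_mul_gg (huv l)
  have ha : (∏ l ∈ (range n).erase i, Qps l) * G = gg i := by
    rw [hG, ← Finset.prod_erase_mul (range n) gg (Finset.mem_range.2 hi), ← mul_assoc,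
      ← Finset.prod_mul_distrib]
    rw [Finset.prod_congr rfl fun l _ => hQgg l, Finset.prod_const_one, one_mul]
  have hb : ∀ k, k < n → (∏ l ∈ range k, Qps l) * G = ∏ l ∈ Ico k n, gg l := by
    intro k hk
    have hsplit : G = (∏ l ∈ range k, gg l) * ∏ l ∈ Ico k n, gg l := by
      rw [hG, Finset.range_eq_Ico, ← Finset.prod_Ico_consecutive gg (Nat.zero_le k) (le_of_lt hk),
        ← Finset.range_eq_Ico]
    rw [hsplit, ← mul_assoc, ← Finset.prod_mul_distrib,
      Finset.prod_congr rfl fun l _ => hQgg l, Finset.prod_const_one, one_mul]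
  calc gg i = (∏ l ∈ (range n).erase i, Qps l) * G := ha.symm
    _ = (∑ k ∈ range n, PowerSeries.C (A k) *
          (PowerSeries.X ^ (n - 1 - k) * ∏ l ∈ range k, Qps l)) * G := by rw [← hQid]
    _ = ∑ k ∈ range n, PowerSeries.C (A k) *
          (PowerSeries.X ^ (n - 1 - k) * ∏ l ∈ Ico k n, gg l) := by
        rw [Finset.sum_mul]
        refine Finset.sum_congr rfl fun k hk => ?_
        rw [show PowerSeries.C (A k) * (PowerSeries.X ^ (n - 1 - k) * ∏ l ∈ range k, Qps l) * G
            = PowerSeries.C (A k) *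
              (PowerSeries.X ^ (n - 1 - k) * ((∏ l ∈ range k, Qps l) * G)) by ring,
          hb k (Finset.mem_range.1 hk)]

lemma row (n : ℕ) (u v : ℕ → R) (huv : ∀ l, u l * v l = 1) (a : ℕ → R)
    (i : ℕ) (hi : i < n) (p : ℕ) :
    u i * facpow (u i) a p - v i * facpow (v i) a p
      = (u i - v i) * ∑ k ∈ range n,
          newtonCoeff (fun l => u l + v l)
              (∏ l ∈ (range n).erase i, (X - C (u l + v l))) k
            * PowerSeries.coeff p
              (PowerSeries.X ^ (n - 1 - k) *
                ((∏ l ∈ Ico k n, (geom (u l) * geom (v l))) *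
                  ∏ s ∈ range p, lin (a (s + 1)))) := by
  rw [row_base]
  congr 1
  rw [key n u v huv i hi, Finset.sum_mul, map_sum]
  refine Finset.sum_congr rfl fun k hk => ?_
  rw [show PowerSeries.C (newtonCoeff (fun l => u l + v l)
        (∏ l ∈ (range n).erase i, (X - C (u l + v l))) k) *
        (PowerSeries.X ^ (n - 1 - k) * ∏ l ∈ Ico k n, (geom (u l) * geom (v l))) *
        ∏ s ∈ range p, lin (a (s + 1))
      = PowerSeries.C (newtonCoeff (fun l => u l + v l)
          (∏ l ∈ (range n).erase i, (X - C (u l + v l))) k) *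
        (PowerSeries.X ^ (n - 1 - k) *
          ((∏ l ∈ Ico k n, (geom (u l) * geom (v l))) * ∏ s ∈ range p, lin (a (s + 1)))) by ring,
    PowerSeries.coeff_C_mul]

end FJT

open Finset Polynomial FJT in
/-- flagged Jacobi-Trudi identity, symplectic case. -/
theorem flagged_jacobi_trudi_sp {R : Type*} [CommRing R] (n : ℕ) (hn : 1 ≤ n)
    (x : Fin n → Rˣ) (a : ℕ → R) (lam : Fin n → ℕ) (hlam : Antitone lam) :
    Matrix.det (Matrix.of fun i j : Fin n =>
        (x i : R) * facpow ((x i : R)) a (lam j + (n - 1 - (j : ℕ)))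
          - (((x i)⁻¹ : Rˣ) : R) * facpow ((((x i)⁻¹ : Rˣ) : R)) a (lam j + (n - 1 - (j : ℕ)))) =
      (∏ i : Fin n, ((x i : R) - (((x i)⁻¹ : Rˣ) : R))) *
      (∏ i : Fin n, ∏ j ∈ Finset.Ioi i,
          ((x i : R) + (((x i)⁻¹ : Rˣ) : R) - (x j : R) - (((x j)⁻¹ : Rˣ) : R))) *
        Matrix.det (Matrix.of fun i j : Fin n =>
          hsp (fun k : Fin (n - (i : ℕ)) =>
              x ⟨(i : ℕ) + (k : ℕ), by have := i.isLt; have := k.isLt; omega⟩) a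
            ((lam j : ℤ) - (j : ℕ) + (i : ℕ))) := by
  classical
  set u : ℕ → R := fun l => if h : l < n then ((x ⟨l, h⟩ : Rˣ) : R) else 1 with hu
  set v : ℕ → R := fun l => if h : l < n then (((x ⟨l, h⟩)⁻¹ : Rˣ) : R) else 1 with hv
  have huv : ∀ l, u l * v l = 1 := by
    intro l
    by_cases h : l < n <;> simp [hu, hv, h]
  set w : ℕ → R := fun l => u l + v l with hw
  have hxu : ∀ i : Fin n, u ↑i = ((x i : Rˣ) : R) := by
    intro i; simp [hu, i.isLt]
  have hxv : ∀ i : Fin n, v ↑i = (((x i)⁻¹ : Rˣ) : R) := by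
    intro i; simp [hv, i.isLt]
  set fp : Fin n → Polynomial R :=
    fun i => ∏ l ∈ (range n).erase ↑i, (X - Polynomial.C (w l)) with hfp
  set A : Matrix (Fin n) (Fin n) R :=
    Matrix.of (fun i k : Fin n => newtonCoeff w (fp i) ↑k) with hA
  set D : Matrix (Fin n) (Fin n) R :=
    Matrix.diagonal (fun i => ((x i : Rˣ) : R) - (((x i)⁻¹ : Rˣ) : R)) with hD
  -- the entry identification
  have hentry : ∀ (k j : Fin n),
      PowerSeries.coeff (lam j + (n - 1 - (j : ℕ)))
        (PowerSeries.X ^ (n - 1 - (k : ℕ)) *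
          ((∏ l ∈ Ico (k : ℕ) n, (geom (u l) * geom (v l))) *
            ∏ s ∈ range (lam j + (n - 1 - (j : ℕ))), lin (a (s + 1))))
      = hsp (fun k' : Fin (n - (k : ℕ)) =>
            x ⟨(k : ℕ) + (k' : ℕ), by have := k.isLt; have := k'.isLt; omega⟩) a
          ((lam j : ℤ) - (j : ℕ) + (k : ℕ)) := by
    intro k j
    have hK : (k : ℕ) < n := k.isLt
    have hJ : (j : ℕ) < n := j.isLt
    rw [PowerSeries.coeff_X_pow_mul']
    unfold hsp
    have hprodeq : (∏ i : Fin (n - (k : ℕ)),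
          geom ((x ⟨(k : ℕ) + (i : ℕ), by have := k.isLt; have := i.isLt; omega⟩ : Rˣ) : R) *
          geom (((x ⟨(k : ℕ) + (i : ℕ), by have := k.isLt; have := i.isLt; omega⟩)⁻¹ : Rˣ) : R))
        = ∏ l ∈ Ico (k : ℕ) n, (geom (u l) * geom (v l)) := by
      rw [Finset.prod_Ico_eq_prod_range,
        ← Fin.prod_univ_eq_prod_range (fun l => geom (u ((k : ℕ) + l)) * geom (v ((k : ℕ) + l)))
          (n - (k : ℕ))]
      refine Finset.prod_congr rfl fun i _ => ?_
      have hi : (k : ℕ) + (i : ℕ) < n := by have := i.isLt; omega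
      rw [hu, hv]
      simp only [dif_pos hi]
    by_cases hm : (0 : ℤ) ≤ (lam j : ℤ) - (j : ℕ) + (k : ℕ)
    · rw [if_pos hm, if_pos (show n - 1 - (k : ℕ) ≤ lam j + (n - 1 - (j : ℕ)) by omega)]
      have htoNat : ((lam j : ℤ) - (j : ℕ) + (k : ℕ)).toNat = lam j + (k : ℕ) - (j : ℕ) := by
        omega
      rw [htoNat]
      have hidx : lam j + (n - 1 - (j : ℕ)) - (n - 1 - (k : ℕ)) = lam j + (k : ℕ) - (j : ℕ) := by
        omega
      have hlin : n - (k : ℕ) + (lam j + (k : ℕ) - (j : ℕ)) - 1 = lam j + (n - 1 - (j : ℕ)) := by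
        omega
      rw [hidx, hlin, hprodeq]
    · rw [if_neg hm, if_neg (show ¬(n - 1 - (k : ℕ) ≤ lam j + (n - 1 - (j : ℕ))) by omega)]
  -- the matrix factorization
  have hmat : (Matrix.of fun i j : Fin n =>
        (x i : R) * facpow ((x i : R)) a (lam j + (n - 1 - (j : ℕ)))
          - (((x i)⁻¹ : Rˣ) : R) * facpow ((((x i)⁻¹ : Rˣ) : R)) a (lam j + (n - 1 - (j : ℕ))))
      = D * A * (Matrix.of fun i j : Fin n =>
          hsp (fun k : Fin (n - (i : ℕ)) =>
              x ⟨(i : ℕ) + (k : ℕ), by have := i.isLt; have := k.isLt; omega⟩) a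
            ((lam j : ℤ) - (j : ℕ) + (i : ℕ))) := by
    ext i j
    rw [Matrix.mul_apply]
    simp only [Matrix.of_apply]
    have hDA : ∀ k : Fin n, (D * A) i k
        = (((x i : Rˣ) : R) - (((x i)⁻¹ : Rˣ) : R)) * newtonCoeff w (fp i) ↑k := by
      intro k
      rw [hD, Matrix.diagonal_mul, hA]
      rfl
    calc (x i : R) * facpow ((x i : R)) a (lam j + (n - 1 - (j : ℕ)))
          - (((x i)⁻¹ : Rˣ) : R) * facpow ((((x i)⁻¹ : Rˣ) : R)) a (lam j + (n - 1 - (j : ℕ)))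
        = u ↑i * facpow (u ↑i) a (lam j + (n - 1 - (j : ℕ)))
          - v ↑i * facpow (v ↑i) a (lam j + (n - 1 - (j : ℕ))) := by rw [hxu, hxv]
      _ = (u ↑i - v ↑i) * ∑ k ∈ range n,
            newtonCoeff w (fp i) k *
            PowerSeries.coeff (lam j + (n - 1 - (j : ℕ)))
              (PowerSeries.X ^ (n - 1 - k) *
                ((∏ l ∈ Ico k n, (geom (u l) * geom (v l))) *
                  ∏ s ∈ range (lam j + (n - 1 - (j : ℕ))), lin (a (s + 1)))) :=
          row n u v huv a ↑i i.isLt (lam j + (n - 1 - (j : ℕ)))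
      _ = ∑ k ∈ range n, (u ↑i - v ↑i) *
            (newtonCoeff w (fp i) k *
            PowerSeries.coeff (lam j + (n - 1 - (j : ℕ)))
              (PowerSeries.X ^ (n - 1 - k) *
                ((∏ l ∈ Ico k n, (geom (u l) * geom (v l))) *
                  ∏ s ∈ range (lam j + (n - 1 - (j : ℕ))), lin (a (s + 1))))) := by
          rw [Finset.mul_sum]
      _ = ∑ k : Fin n, (u ↑i - v ↑i) *
            (newtonCoeff w (fp i) ↑k *
            PowerSeries.coeff (lam j + (n - 1 - (j : ℕ)))
              (PowerSeries.X ^ (n - 1 - (k : ℕ)) *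
                ((∏ l ∈ Ico (k : ℕ) n, (geom (u l) * geom (v l))) *
                  ∏ s ∈ range (lam j + (n - 1 - (j : ℕ))), lin (a (s + 1))))) :=
          (Fin.sum_univ_eq_sum_range _ n).symm
      _ = _ := by
          refine Finset.sum_congr rfl fun k _ => ?_
          rw [hDA k, hentry k j, hxu, hxv]
          ring
  rw [hmat, Matrix.det_mul, Matrix.det_mul]
  have hdetD : D.det = ∏ i : Fin n, ((x i : R) - (((x i)⁻¹ : Rˣ) : R)) := by
    rw [hD, Matrix.det_diagonal]
  have htri : A.BlockTriangular id := by
    intro i k hik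
    have hik' : (k : ℕ) < (i : ℕ) := hik
    rw [hA, Matrix.of_apply]
    refine newtonCoeff_eq_zero ↑k w (fp i) ↑i hik' ?_
    simp only [hfp]
    refine Finset.prod_dvd_prod_of_subset _ _ _ ?_
    intro l hl
    have hl' : l < (i : ℕ) := Finset.mem_range.1 hl
    rw [Finset.mem_erase]
    exact ⟨by omega, Finset.mem_range.2 (by have := i.isLt; omega)⟩
  have hdiag : ∀ i : Fin n, A i i
      = ∏ l ∈ Ico ((i : ℕ) + 1) n, (w ↑i - w l) := by
    intro i
    have hset : (range n).erase ↑i = range ↑i ∪ Ico ((i : ℕ) + 1) n := by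
      ext l
      simp only [Finset.mem_erase, Finset.mem_range, Finset.mem_union, Finset.mem_Ico]
      have := i.isLt
      omega
    have hdisj : Disjoint (range (i : ℕ)) (Ico ((i : ℕ) + 1) n) := by
      rw [Finset.disjoint_left]
      intro l hl hl2
      have := Finset.mem_range.1 hl
      have := (Finset.mem_Ico.1 hl2).1
      omega
    have hsplit : fp i = (∏ l ∈ range (i : ℕ), (X - Polynomial.C (w l))) *
        ∏ l ∈ Ico ((i : ℕ) + 1) n, (X - Polynomial.C (w l)) := by
      simp only [hfp]
      rw [hset, Finset.prod_union hdisj]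
    rw [hA, Matrix.of_apply, hsplit, newtonCoeff_diag ↑i w _]
    rw [Polynomial.eval_prod]
    exact Finset.prod_congr rfl fun l _ => by rw [Polynomial.eval_sub, Polynomial.eval_X,
      Polynomial.eval_C]
  have hdetA : A.det = ∏ i : Fin n, ∏ j ∈ Finset.Ioi i,
      ((x i : R) + (((x i)⁻¹ : Rˣ) : R) - (x j : R) - (((x j)⁻¹ : Rˣ) : R)) := by
    rw [Matrix.det_of_upperTriangular htri]
    refine Finset.prod_congr rfl fun i _ => ?_
    rw [hdiag i]
    refine Finset.prod_nbij' (fun l => if h : l < n then (⟨l, h⟩ : Fin n) else i)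
      (fun jj => (jj : ℕ)) ?_ ?_ ?_ ?_ ?_
    · intro l hl
      have hl' := Finset.mem_Ico.1 hl
      simp only [dif_pos hl'.2, Finset.mem_Ioi]
      exact Fin.lt_def.2 (show (i : ℕ) < l by omega)
    · intro jj hjj
      have h2 := Fin.lt_def.1 (Finset.mem_Ioi.1 hjj)
      simp only [Finset.mem_Ico]
      exact ⟨by omega, jj.isLt⟩
    · intro l hl
      have hl' := Finset.mem_Ico.1 hl
      simp only [dif_pos hl'.2]
    · intro jj hjj
      simp only [dif_pos jj.isLt]
    · intro l hl
      have hl' := Finset.mem_Ico.1 hl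
      simp only [dif_pos hl'.2]
      have h1 : w ↑i = (x i : R) + (((x i)⁻¹ : Rˣ) : R) := by
        show u ↑i + v ↑i = _
        rw [hxu i, hxv i]
      have h2 : w l = ((x (⟨l, hl'.2⟩ : Fin n) : Rˣ) : R)
          + (((x (⟨l, hl'.2⟩ : Fin n))⁻¹ : Rˣ) : R) := by
        show u l + v l = _
        rw [hu, hv]
        simp only [dif_pos hl'.2]
      rw [h1, h2]
      ring
  rw [hdetD, hdetA]
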